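/- With J symmetric positive definite and the additive Schwarz operator P = Σ_{i=1}^m R_i^T (R_i J R_i^T)^{-1} R_i as above, every eigenvalue λ of PJ satisfies 0 < λ ≤ m·ν, where ν is the maximum number of subdomains containing any given index (maximal overlap); in particular λ_max(PJ) ≤ m. -/

import Mathlib

open Matrix

/-- The row-selection ("restriction") matrix whose rows are the rows `ι a` of the
identity matrix. -/
def selMatrix {k N : ℕ} (ι : Fin k → Fin N) : Matrix (Fin k) (Fin N) ℝ :=
  Matrix.of fun a b => if ι a = b then 1 else 0

lemma selMatrix_mulVec {k N : ℕ} (ι : Fin k → Fin N) (z : Fin N → ℝ) (a : Fin k) :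
    (selMatrix ι *ᵥ z) a = z (ι a) := by
  simp [selMatrix, mulVec, dotProduct]

lemma selMatrix_transpose_mulVec {k N : ℕ} (ι : Fin k → Fin N) (hinj : Function.Injective ι)
    (y : Fin k → ℝ) (a : Fin k) : ((selMatrix ι)ᵀ *ᵥ y) (ι a) = y a := by
  simp only [mulVec, dotProduct, transpose_apply, selMatrix, Matrix.of_apply]
  rw [Finset.sum_eq_single a]
  · simp
  · intro b _ hb
    rw [if_neg (fun h => hb (hinj h)), zero_mul]
  · simp

lemma dot_conj {l n : Type*} [Fintype l] [Fintype n] (A : Matrix l l ℝ) (B : Matrix l n ℝ)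
    (x : n → ℝ) : x ⬝ᵥ ((Bᵀ * A * B) *ᵥ x) = (B *ᵥ x) ⬝ᵥ (A *ᵥ (B *ᵥ x)) := by
  rw [← mulVec_mulVec, ← mulVec_mulVec, dotProduct_mulVec, vecMul_transpose]

lemma sum_mulVec' {ι' : Type*} {n' : Type*} [Fintype n'] (s : Finset ι')
    (A : ι' → Matrix n' n' ℝ) (v : n' → ℝ) :
    (∑ i ∈ s, A i) *ᵥ v = ∑ i ∈ s, A i *ᵥ v := by
  ext j
  simp only [mulVec, dotProduct, Finset.sum_apply, Matrix.sum_apply, Finset.sum_mul]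
  rw [Finset.sum_comm]

lemma dotProduct_sum' {ι' : Type*} {n' : Type*} [Fintype n'] (s : Finset ι')
    (u : n' → ℝ) (f : ι' → n' → ℝ) : u ⬝ᵥ (∑ i ∈ s, f i) = ∑ i ∈ s, u ⬝ᵥ f i := by
  simp [dotProduct, Finset.sum_apply, Finset.mul_sum]
  rw [Finset.sum_comm]

lemma dot_self_nonneg' {n' : Type*} [Fintype n'] (v : n' → ℝ) : 0 ≤ v ⬝ᵥ v :=
  Finset.sum_nonneg fun _ _ => mul_self_nonneg _

lemma dot_self_pos' {n' : Type*} [Fintype n'] {v : n' → ℝ} (h : v ≠ 0) : 0 < v ⬝ᵥ v := by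
  obtain ⟨j, hj⟩ := Function.ne_iff.mp h
  refine Finset.sum_pos' (fun i _ => mul_self_nonneg _) ⟨j, Finset.mem_univ j, ?_⟩
  exact mul_self_pos.mpr hj

lemma star_eq_self' {n' : Type*} (v : n' → ℝ) : star v = v := by
  funext i; simp

/-- with `J` SPD and `P = ∑ᵢ Rᵢᵀ (Rᵢ J Rᵢᵀ)⁻¹ Rᵢ`, every eigenvalue
`λ` of `P J` satisfies `0 < λ ≤ m ν` where `ν` bounds the maximal overlap (number of
subdomains containing any given index); in particular `λ ≤ m`. -/
theorem additiveSchwarz_spectrum_bounds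
    (N m : ℕ) (J : Matrix (Fin N) (Fin N) ℝ) (hJ : J.PosDef)
    (n : Fin m → ℕ) (ι : ∀ i, Fin (n i) → Fin N)
    (hinj : ∀ i, Function.Injective (ι i))
    (hcover : ∀ j : Fin N, ∃ i a, ι i a = j)
    (ν : ℕ)
    (hν : ∀ j : Fin N, (Finset.univ.filter fun i => ∃ a, ι i a = j).card ≤ ν) :
    ∀ lam ∈ spectrum ℝ
        ((∑ i, (selMatrix (ι i))ᵀ * (selMatrix (ι i) * J * (selMatrix (ι i))ᵀ)⁻¹ *
          selMatrix (ι i)) * J),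
      0 < lam ∧ lam ≤ (m : ℝ) * ν ∧ lam ≤ (m : ℝ) := by
  intro lam hlam
  set R : ∀ i, Matrix (Fin (n i)) (Fin N) ℝ := fun i => selMatrix (ι i) with hR
  set G : ∀ i, Matrix (Fin (n i)) (Fin (n i)) ℝ := fun i => R i * J * (R i)ᵀ with hG
  have hJsym : Jᵀ = J := by
    rw [← Matrix.conjTranspose_eq_transpose_of_trivial]; exact hJ.isHermitian
  -- G i is positive definite
  have hGpd : ∀ i, (G i).PosDef := by
    intro i
    refine Matrix.PosDef.of_dotProduct_mulVec_pos ?_ ?_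
    · show (G i)ᴴ = G i
      rw [Matrix.conjTranspose_eq_transpose_of_trivial]
      simp only [hG, Matrix.transpose_mul, Matrix.transpose_transpose, hJsym]
      simp only [Matrix.mul_assoc]
    · intro y hy
      rw [star_eq_self']
      have hGi : G i = ((R i)ᵀ)ᵀ * J * (R i)ᵀ := by rw [Matrix.transpose_transpose]
      rw [hGi, dot_conj]
      have hne : (R i)ᵀ *ᵥ y ≠ 0 := by
        intro h0
        apply hy
        funext a
        have := selMatrix_transpose_mulVec (ι i) (hinj i) y a
        rw [show (selMatrix (ι i))ᵀ *ᵥ y = 0 from h0] at this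
        exact this.symm
      have := hJ.dotProduct_mulVec_pos hne
      rwa [star_eq_self'] at this
  have hGdet : ∀ i, IsUnit (G i).det :=
    fun i => isUnit_iff_ne_zero.mpr (hGpd i).det_pos.ne'
  -- square root of J
  set S := (open MatrixOrder in CFC.sqrt J) with hSdef
  have hS2 : S * S = J := by
    open MatrixOrder in exact CFC.sqrt_mul_sqrt_self J hJ.posSemidef.nonneg
  have hSsym : Sᵀ = S := by
    rw [← Matrix.conjTranspose_eq_transpose_of_trivial]
    open MatrixOrder in exact (CFC.sqrt_nonneg J).isSelfAdjoint
  have hSdet : S.det ≠ 0 := by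
    intro h
    have : J.det = 0 := by rw [← hS2, Matrix.det_mul, h, mul_zero]
    exact hJ.det_pos.ne' this
  have hSunit : IsUnit S := (Matrix.isUnit_iff_isUnit_det S).mpr (isUnit_iff_ne_zero.mpr hSdet)
  obtain ⟨u, hu⟩ := hSunit
  set P : Matrix (Fin N) (Fin N) ℝ := ∑ i, (R i)ᵀ * (G i)⁻¹ * R i with hP
  -- conjugated operator
  set B : Matrix (Fin N) (Fin N) ℝ := S * P * S with hB
  have hconj : S * (P * J) * S⁻¹ = B := by
    rw [hB, ← hS2]
    rw [show S * (P * (S * S)) * S⁻¹ = S * P * S * (S * S⁻¹) by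
      simp only [Matrix.mul_assoc]]
    rw [Matrix.mul_nonsing_inv S (isUnit_iff_ne_zero.mpr hSdet), Matrix.mul_one]
  have hlamB : lam ∈ spectrum ℝ B := by
    rw [← hconj]
    have h1 : (u : Matrix (Fin N) (Fin N) ℝ) = S := hu
    have h2 : ((u⁻¹ : _ˣ) : Matrix (Fin N) (Fin N) ℝ) = S⁻¹ := by
      rw [Matrix.coe_units_inv, h1]
    rw [← h2, ← h1, spectrum.units_conjugate]
    exact hlam
  -- eigenvector
  rw [spectrum.mem_iff] at hlamB
  have hdet0 : (algebraMap ℝ (Matrix (Fin N) (Fin N) ℝ) lam - B).det = 0 := by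
    by_contra h
    exact hlamB ((Matrix.isUnit_iff_isUnit_det _).mpr (isUnit_iff_ne_zero.mpr h))
  obtain ⟨v, hv0, hv⟩ := (Matrix.exists_mulVec_eq_zero_iff).mpr hdet0
  have hBv : B *ᵥ v = lam • v := by
    rw [Algebra.algebraMap_eq_smul_one, Matrix.sub_mulVec, smul_mulVec,
      Matrix.one_mulVec, sub_eq_zero] at hv
    exact hv.symm
  set c : ℝ := v ⬝ᵥ v with hc
  have hcpos : 0 < c := dot_self_pos' hv0
  obtain ⟨j0, hj0⟩ := Function.ne_iff.mp hv0
  -- ν ≥ 1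
  have hν1 : 1 ≤ ν := by
    obtain ⟨i0, a0, h0⟩ := hcover j0
    refine le_trans ?_ (hν j0)
    rw [Nat.one_le_iff_ne_zero, ← Nat.pos_iff_ne_zero, Finset.card_pos]
    exact ⟨i0, Finset.mem_filter.mpr ⟨Finset.mem_univ _, ⟨a0, h0⟩⟩⟩
  -- the projections
  set T : Fin m → Matrix (Fin N) (Fin N) ℝ :=
    fun i => (R i * S)ᵀ * (G i)⁻¹ * (R i * S) with hT
  have hBsum : B = ∑ i, T i := by
    rw [hB, hP, Finset.mul_sum, Finset.sum_mul]
    refine Finset.sum_congr rfl fun i _ => ?_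
    simp only [hT, Matrix.transpose_mul, hSsym]
    simp only [Matrix.mul_assoc]
  have hGsym : ∀ i, (G i)ᵀ = G i := by
    intro i
    simp only [hG, Matrix.transpose_mul, Matrix.transpose_transpose, hJsym]
    simp only [Matrix.mul_assoc]
  have hTsym : ∀ i, (T i)ᵀ = T i := by
    intro i
    simp only [hT, Matrix.transpose_mul, Matrix.transpose_transpose,
      Matrix.transpose_nonsing_inv, hGsym]
    simp only [Matrix.mul_assoc]
  have hT2 : ∀ i, T i * T i = T i := by
    intro i
    simp only [hT]
    have hmid : (R i * S) * ((R i * S)ᵀ) = G i := by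
      simp only [Matrix.transpose_mul, hSsym, hG]
      rw [show R i * S * (S * (R i)ᵀ) = R i * ((S * S) * (R i)ᵀ) by
        simp only [Matrix.mul_assoc], hS2, ← Matrix.mul_assoc]
    calc (R i * S)ᵀ * (G i)⁻¹ * (R i * S) * ((R i * S)ᵀ * (G i)⁻¹ * (R i * S))
        = (R i * S)ᵀ * ((G i)⁻¹ * ((R i * S) * (R i * S)ᵀ) * (G i)⁻¹) * (R i * S) := by
          simp only [Matrix.mul_assoc]
      _ = (R i * S)ᵀ * (G i)⁻¹ * (R i * S) := by
          rw [hmid, Matrix.nonsing_inv_mul _ (hGdet i), Matrix.one_mul]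
  set z : Fin N → ℝ := S *ᵥ v with hz
  have hz0 : z ≠ 0 := by
    intro h
    apply hv0
    have : (S⁻¹ * S) *ᵥ v = S⁻¹ *ᵥ z := by rw [← mulVec_mulVec, hz]
    rw [Matrix.nonsing_inv_mul S (isUnit_iff_ne_zero.mpr hSdet), Matrix.one_mulVec] at this
    rw [this, h, mulVec_zero]
  -- quadratic form of each T i
  have hquad : ∀ i, v ⬝ᵥ (T i *ᵥ v) = (R i *ᵥ z) ⬝ᵥ ((G i)⁻¹ *ᵥ (R i *ᵥ z)) := by
    intro i
    simp only [hT]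
    rw [dot_conj, ← mulVec_mulVec]
  have hqnonneg : ∀ i, 0 ≤ v ⬝ᵥ (T i *ᵥ v) := by
    intro i
    rw [hquad i]
    have := (hGpd i).inv.posSemidef.dotProduct_mulVec_nonneg (R i *ᵥ z)
    rwa [star_eq_self'] at this
  -- strict positivity
  have hpos : 0 < v ⬝ᵥ (B *ᵥ v) := by
    obtain ⟨j1, hj1⟩ := Function.ne_iff.mp hz0
    obtain ⟨i1, a1, ha1⟩ := hcover j1
    rw [hBsum, sum_mulVec', dotProduct_sum']
    refine Finset.sum_pos' (fun i _ => hqnonneg i) ⟨i1, Finset.mem_univ i1, ?_⟩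
    rw [hquad i1]
    have hw : R i1 *ᵥ z ≠ 0 := by
      intro h
      apply hj1
      have := selMatrix_mulVec (ι i1) z a1
      rw [show selMatrix (ι i1) *ᵥ z = 0 from h, ha1] at this
      exact this.symm
    have := (hGpd i1).inv.dotProduct_mulVec_pos hw
    rwa [star_eq_self'] at this
  -- upper bound per term
  have hub : ∀ i, v ⬝ᵥ (T i *ᵥ v) ≤ c := by
    intro i
    set D : Matrix (Fin N) (Fin N) ℝ := 1 - T i with hD
    have hDsym : Dᵀ = D := by
      rw [hD, Matrix.transpose_sub, Matrix.transpose_one, hTsym]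
    have hD2 : D * D = D := by
      rw [hD]
      simp only [Matrix.sub_mul, Matrix.mul_sub, Matrix.one_mul, Matrix.mul_one, hT2]
      abel
    have hDnn : 0 ≤ v ⬝ᵥ (D *ᵥ v) := by
      rw [show D = Dᵀ * D by rw [hDsym, hD2], ← mulVec_mulVec, dotProduct_mulVec,
        vecMul_transpose]
      exact dot_self_nonneg' _
    have hexp : v ⬝ᵥ (D *ᵥ v) = c - v ⬝ᵥ (T i *ᵥ v) := by
      rw [hD, Matrix.sub_mulVec, Matrix.one_mulVec, dotProduct_sub, hc]
    rw [hexp] at hDnn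
    linarith
  -- combine
  have hBle : v ⬝ᵥ (B *ᵥ v) ≤ (m : ℝ) * c := by
    rw [hBsum, sum_mulVec', dotProduct_sum']
    calc ∑ i, v ⬝ᵥ (T i *ᵥ v) ≤ ∑ _i : Fin m, c := Finset.sum_le_sum fun i _ => hub i
      _ = (m : ℝ) * c := by rw [Finset.sum_const, Finset.card_univ, Fintype.card_fin,
            nsmul_eq_mul]
  have heig : v ⬝ᵥ (B *ᵥ v) = lam * c := by
    rw [hBv, dotProduct_smul, smul_eq_mul, hc]
  have hlampos : 0 < lam := by
    rw [heig] at hpos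
    by_contra h
    push_neg at h
    nlinarith
  have hlamle : lam ≤ (m : ℝ) := by
    rw [heig] at hBle
    exact le_of_mul_le_mul_right hBle hcpos
  refine ⟨hlampos, ?_, hlamle⟩
  calc lam ≤ (m : ℝ) := hlamle
    _ ≤ (m : ℝ) * ν := le_mul_of_one_le_right (Nat.cast_nonneg m)
        (by exact_mod_cast hν1)
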